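/- arXiv:2505.12769 — 3 statements merged into one kernel-verified Lean document; each statement's English description precedes it below -/
import Mathlib

section
/- Let G be a directed graph in which no edge outside a cycle has its range on a vertex of that cycle (i.e., no cycle has an entry). Then any two distinct cycles in G are vertex-disjoint. -/
/-- A cycle of length `n` in a directed graph with edge set `E`, source map `s`
and range map `r`: a cyclically indexed family of edges `c : ZMod n → E`
(with `n > 0`) such that the source of each edge is the range of the previous one. -/
def IsGraphCycle {V E : Type*} (s r : E → V) (n : ℕ) (c : ZMod n → E) : Prop :=
  0 < n ∧ ∀ i : ZMod n, s (c (i + 1)) = r (c i)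

/-- The vertex set of a cycle (the ranges of its edges, which coincide with the
sources of its edges). -/
def cycleVertices {V E : Type*} (r : E → V) {n : ℕ} (c : ZMod n → E) : Set V :=
  r '' Set.range c

/-- "No cycle has an entry": no edge outside a cycle has its range on a vertex
of that cycle. -/
def NoCycleHasEntry {V E : Type*} (s r : E → V) : Prop :=
  ∀ (n : ℕ) (c : ZMod n → E), IsGraphCycle s r n c →
    ∀ f : E, f ∉ Set.range c → r f ∉ cycleVertices r c

private lemma range_subset_of_shared_vertex {V E : Type*} (s r : E → V)
    (hne : NoCycleHasEntry s r) {n m : ℕ} (c₁ : ZMod n → E) (c₂ : ZMod m → E)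
    (h₁ : IsGraphCycle s r n c₁) (h₂ : IsGraphCycle s r m c₂)
    {v : V} (hv₁ : v ∈ cycleVertices r c₁) (hv₂ : v ∈ cycleVertices r c₂) :
    Set.range c₂ ⊆ Set.range c₁ := by
  haveI : NeZero m := ⟨h₂.1.ne'⟩
  obtain ⟨e, ⟨j₀, rfl⟩, hv⟩ := hv₂
  -- every edge of c₁ has range a vertex of c₁, and edges of c₁ have source a vertex of c₁
  have key : ∀ t : ℕ, r (c₂ (j₀ - t)) ∈ cycleVertices r c₁ := by
    intro t
    induction t with
    | zero => simpa [hv] using hv₁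
    | succ t ih =>
      push_cast
      -- the edge c₂ (j₀ - t) has range in vertices c₁, hence lies in range c₁
      have hedge : c₂ (j₀ - t) ∈ Set.range c₁ := by
        by_contra hc
        exact hne n c₁ h₁ _ hc ih
      obtain ⟨k, hk⟩ := hedge
      have hs : r (c₂ (j₀ - ((t : ZMod m) + 1))) = s (c₂ (j₀ - t)) := by
        have := h₂.2 (j₀ - (t + 1))
        have harg : j₀ - ((t : ZMod m) + 1) + 1 = j₀ - t := by ring
        rw [harg] at this
        exact this.symm
      have hs₁ : s (c₁ k) = r (c₁ (k - 1)) := by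
        have := h₁.2 (k - 1)
        simpa using this
      rw [hs, ← hk, hs₁]
      exact ⟨c₁ (k - 1), ⟨k - 1, rfl⟩, rfl⟩
  rintro e ⟨j, rfl⟩
  have hj : j₀ - ((j₀ - j).val : ZMod m) = j := by
    rw [ZMod.natCast_val, ZMod.cast_id]; ring
  have hr : r (c₂ j) ∈ cycleVertices r c₁ := by
    have := key (j₀ - j).val
    rwa [hj] at this
  by_contra hc
  exact hne n c₁ h₁ _ hc hr

/-- If no cycle of a directed graph has an entry, then any two distinct cycles
(i.e. cycles with different edge sets) are vertex-disjoint. -/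
theorem cycles_disjoint_of_noEntry {V E : Type*} (s r : E → V)
    (hne : NoCycleHasEntry s r)
    {n m : ℕ} (c₁ : ZMod n → E) (c₂ : ZMod m → E)
    (h₁ : IsGraphCycle s r n c₁) (h₂ : IsGraphCycle s r m c₂)
    (hdist : Set.range c₁ ≠ Set.range c₂) :
    Disjoint (cycleVertices r c₁) (cycleVertices r c₂) := by
  rw [Set.disjoint_iff_inter_eq_empty]
  by_contra hc
  obtain ⟨v, hv₁, hv₂⟩ := Set.nonempty_iff_ne_empty.mpr hc
  exact hdist (le_antisymm
    (range_subset_of_shared_vertex s r hne c₂ c₁ h₂ h₁ hv₂ hv₁)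
    (range_subset_of_shared_vertex s r hne c₁ c₂ h₁ h₂ hv₁ hv₂))
end

section
/- Let G be a directed graph containing a cycle μ with an entry (i.e., there is an edge f not in μ with r(f) a vertex of μ). Then C*(G) admits no faithful tracial state. Consequently, via the standard fact that RFD C*-algebras with countably many generators admit faithful traces, C*(G) is not residually finite-dimensional. -/
open scoped Matrix.Norms.L2Operator

/-- A unital Cuntz–Krieger `G`-family in a unital complex star algebra `A`, for
a finite directed graph `G = (V, E, s, r)`: mutually orthogonal self-adjoint
idempotents `p v` summing to `1`, and elements `se e` satisfying the
Cuntz–Krieger relations. -/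
structure CKFamily (V E : Type) [Fintype V] [Fintype E] [DecidableEq V]
    (s r : E → V) (A : Type*) [Ring A] [Algebra ℂ A] [StarRing A] where
  p : V → A
  se : E → A
  proj_idem : ∀ v, p v * p v = p v
  proj_star : ∀ v, star (p v) = p v
  orth : ∀ v w, v ≠ w → p v * p w = 0
  ck1 : ∀ e, star (se e) * se e = p (s e)
  ck2 : ∀ v, (∃ e, r e = v) →
    p v = ∑ e ∈ Finset.univ.filter (fun e => r e = v), se e * star (se e)
  sum_p : ∑ v, p v = 1

/-- The C*-algebra `A`, equipped with the Cuntz–Krieger family `F`, is the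
graph C*-algebra `C*(G)`: it satisfies the universal property that every
Cuntz–Krieger `G`-family in a unital C*-algebra `B` is the image of `F` under a
unique unital *-homomorphism. -/
def IsUniversalCKFamily (V E : Type) [Fintype V] [Fintype E] [DecidableEq V]
    (s r : E → V) (A : Type*) [Ring A] [Algebra ℂ A] [StarRing A]
    (F : CKFamily V E s r A) : Prop :=
  ∀ (B : Type) [NormedRing B] [StarRing B] [CStarRing B] [NormedAlgebra ℂ B]
    [StarModule ℂ B] [CompleteSpace B] (Q : CKFamily V E s r B),
    ∃! φ : A →⋆ₐ[ℂ] B, (∀ v, φ (F.p v) = Q.p v) ∧ (∀ e, φ (F.se e) = Q.se e)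

set_option linter.unusedSectionVars false

namespace NoTraceAux

open Function

variable {V E : Type} {s r : E → V}

/-- Boundary paths: `fn 0` is the edge nearest the range vertex `v`; the path
either continues forever or stalls at a vertex with no incoming edges. -/
@[ext] structure BPath (V E : Type) (s r : E → V) : Type where
  v : V
  fn : ℕ → Option E
  h0 : ∀ e, fn 0 = some e → r e = v
  hstart : fn 0 = none → ∀ e, r e ≠ v
  hchain : ∀ k e', fn (k + 1) = some e' → ∃ e, fn k = some e ∧ r e' = s e
  hstop : ∀ k e, fn k = some e → fn (k + 1) = none → ∀ e', r e' ≠ s e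

/-- Prepend an edge to a boundary path. -/
def cons (e : E) (b : BPath V E s r) (hb : b.v = s e) : BPath V E s r where
  v := r e
  fn := fun k => Nat.rec (some e) (fun m _ => b.fn m) k
  h0 := fun e' he' => by cases he'; rfl
  hstart := fun h => by cases h
  hchain := by
    intro k e' he'
    cases k with
    | zero =>
      exact ⟨e, rfl, by rw [b.h0 e' he', hb]⟩
    | succ m => exact b.hchain m e' he'
  hstop := by
    intro k e0 hk hk1
    cases k with
    | zero =>
      cases hk
      intro e' he'
      exact b.hstart hk1 e' (by rw [he', hb])
    | succ m => exact b.hstop m e0 hk hk1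

@[simp] lemma cons_v (e : E) (b : BPath V E s r) (hb) : (cons e b hb).v = r e := rfl
@[simp] lemma cons_fn_zero (e : E) (b : BPath V E s r) (hb) : (cons e b hb).fn 0 = some e := rfl
@[simp] lemma cons_fn_succ (e : E) (b : BPath V E s r) (hb) (k : ℕ) :
    (cons e b hb).fn (k + 1) = b.fn k := rfl

/-- Remove the first edge of a boundary path. -/
def tail (y : BPath V E s r) (e : E) (h : y.fn 0 = some e) : BPath V E s r where
  v := s e
  fn := fun k => y.fn (k + 1)
  h0 := by
    intro e' he'
    obtain ⟨e0, he0, hre⟩ := y.hchain 0 e' he'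
    rw [h] at he0; cases he0; exact hre
  hstart := fun h1 => y.hstop 0 e h h1
  hchain := fun k e' he' => y.hchain (k + 1) e' he'
  hstop := fun k e0 hk hk1 => y.hstop (k + 1) e0 hk hk1

@[simp] lemma tail_v (y : BPath V E s r) (e : E) (h) : (tail y e h).v = s e := rfl

lemma cons_tail (y : BPath V E s r) (e : E) (h : y.fn 0 = some e) :
    cons e (tail y e h) rfl = y := by
  ext1
  · exact y.h0 e h
  · funext k; cases k with
    | zero => exact h.symm
    | succ m => rfl

lemma tail_cons (e : E) (b : BPath V E s r) (hb) :
    tail (cons e b hb) e rfl = b := by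
  ext1
  · exact hb.symm
  · rfl

/-- The prepend map as a function on the subtype of paths based at `s e`. -/
def consMap (e : E) (b : {b : BPath V E s r // b.v = s e}) : BPath V E s r :=
  cons e b.1 b.2

lemma consMap_injective (e : E) : Injective (consMap (s := s) (r := r) e) := by
  intro b1 b2 h
  refine Subtype.ext (BPath.ext (b1.2.trans b2.2.symm) (funext fun k => ?_))
  have := congrFun (congrArg BPath.fn h) (k + 1)
  exact this

lemma mem_range_consMap {e : E} {y : BPath V E s r} :
    y ∈ Set.range (consMap (s := s) (r := r) e) ↔ y.fn 0 = some e := by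
  constructor
  · rintro ⟨b, rfl⟩; rfl
  · intro h; exact ⟨⟨tail y e h, rfl⟩, cons_tail y e h⟩

section exists_path

variable (s r)

open Classical in
/-- Choose an incoming edge at `v` if one exists. -/
noncomputable def pick (v : V) : Option E :=
  if h : ∃ e, r e = v then some h.choose else none

lemma pick_some {v : V} {e : E} (h : pick r v = some e) : r e = v := by
  unfold pick at h
  split at h
  · cases h; exact ‹∃ e, r e = v›.choose_spec
  · cases h

lemma pick_none {v : V} (h : pick r v = none) : ∀ e, r e ≠ v := by
  unfold pick at h
  split at h
  · cases h
  · exact not_exists.1 ‹¬∃ e, r e = v›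

/-- Vertex sequence of the greedy backwards path. -/
noncomputable def wseq (v : V) : ℕ → V :=
  fun k => Nat.rec v (fun _ u => (pick r u).elim u s) k

lemma wseq_succ (v : V) (k : ℕ) :
    wseq s r v (k + 1) = (pick r (wseq s r v k)).elim (wseq s r v k) s := rfl

/-- A boundary path based at any given vertex. -/
noncomputable def somePath (v : V) : BPath V E s r where
  v := v
  fn := fun k => pick r (wseq s r v k)
  h0 := fun e he => pick_some r he
  hstart := fun h => pick_none r h
  hchain := by
    intro k e' he'
    change pick r (wseq s r v (k + 1)) = some e' at he'
    cases hk : pick r (wseq s r v k) with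
    | none =>
      rw [wseq_succ, hk] at he'
      change pick r (wseq s r v k) = some e' at he'
      rw [he'] at hk; cases hk
    | some e =>
      refine ⟨e, rfl, ?_⟩
      have : wseq s r v (k + 1) = s e := by rw [wseq_succ, hk]; rfl
      rw [← this]
      exact pick_some r he'
  hstop := by
    intro k e hk hk1 e'
    change pick r (wseq s r v k) = some e at hk
    change pick r (wseq s r v (k + 1)) = none at hk1
    have : wseq s r v (k + 1) = s e := by rw [wseq_succ, hk]; rfl
    rw [← this]
    exact pick_none r hk1 e'

@[simp] lemma somePath_v (v : V) : (somePath s r v).v = v := rfl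

end exists_path



open scoped ENNReal

section gadget

open Function

variable {X α : Type}

local notation "H" => lp (fun _ : X => ℂ) 2

noncomputable def sfun (j k : α → X) (ξ : X → ℂ) : X → ℂ :=
  Function.extend j (fun a => ξ (k a)) 0

lemma extend_zero_apply_notMem {M : Type*} [Zero M] (j : α → X) (g : α → M) {y : X}
    (h : y ∉ Set.range j) : Function.extend j g 0 y = (0 : M) :=
  Function.extend_apply' _ _ _ (fun ⟨a, ha⟩ => h ⟨a, ha⟩)

lemma support_extend_zero {M : Type*} [Zero M] (j : α → X) (g : α → M) :
    Function.support (Function.extend j g 0) ⊆ Set.range j := by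
  intro y hy
  by_contra h
  exact hy (extend_zero_apply_notMem j g h)

lemma sfun_apply_j {j : α → X} (hj : Injective j) (k : α → X) (ξ : X → ℂ) (a : α) :
    sfun j k ξ (j a) = ξ (k a) := hj.extend_apply _ _ _

lemma sfun_apply_notMem {j : α → X} (k : α → X) (ξ : X → ℂ) {y : X}
    (h : y ∉ Set.range j) : sfun j k ξ y = 0 :=
  extend_zero_apply_notMem j _ h

lemma support_sfun (j k : α → X) (ξ : X → ℂ) :
    Function.support (sfun j k ξ) ⊆ Set.range j := by
  intro y hy
  by_contra h
  exact hy (sfun_apply_notMem k ξ h)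

lemma two_toReal_pos : (0:ℝ) < (2 : ℝ≥0∞).toReal := by norm_num

lemma summable_comp_inj {g : X → ℝ} (hg : Summable g) (h0 : ∀ x, 0 ≤ g x)
    {k : α → X} (hk : Injective k) :
    Summable (fun a => g (k a)) ∧ ∑' a, g (k a) ≤ ∑' x, g x := by
  set G : X → ℝ := Function.extend k (fun a => g (k a)) 0 with hG
  have hGval : ∀ x, G x ≤ g x ∧ 0 ≤ G x := by
    intro x
    by_cases hx : x ∈ Set.range k
    · obtain ⟨a, rfl⟩ := hx
      rw [hG, hk.extend_apply]
      exact ⟨le_refl _, h0 _⟩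
    · rw [hG, extend_zero_apply_notMem k _ hx]
      exact ⟨h0 x, le_refl _⟩
  have hGsum : Summable G :=
    Summable.of_nonneg_of_le (fun x => (hGval x).2) (fun x => (hGval x).1) hg
  have hcomp : Summable fun a => g (k a) :=
    ⟨∑' x, G x, (hasSum_extend_zero hk).1 hGsum.hasSum⟩
  refine ⟨hcomp, ?_⟩
  have h1 : ∑' a, G (k a) = ∑' x, G x :=
    Function.Injective.tsum_eq hk (support_extend_zero k _)
  have h2 : ∀ a, G (k a) = g (k a) := fun a => hk.extend_apply _ _ _
  calc ∑' a, g (k a) = ∑' x, G x := by rw [← h1]; exact tsum_congr fun a => (h2 a).symm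
    _ ≤ ∑' x, g x := Summable.tsum_le_tsum (fun x => (hGval x).1) hGsum hg

lemma norm_sfun_rpow {j : α → X} (hj : Injective j) (k : α → X) (ξ : X → ℂ) :
    (fun y => ‖sfun j k ξ y‖ ^ (2 : ℝ≥0∞).toReal) =
      Function.extend j (fun a => ‖ξ (k a)‖ ^ (2 : ℝ≥0∞).toReal) 0 := by
  funext y
  by_cases hy : y ∈ Set.range j
  · obtain ⟨a, rfl⟩ := hy
    rw [sfun_apply_j hj, hj.extend_apply]
  · rw [sfun_apply_notMem k ξ hy, extend_zero_apply_notMem j _ hy]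
    simp [Real.zero_rpow two_toReal_pos.ne']

lemma summable_norm_ξ (ξ : H) : Summable fun x => ‖(ξ : X → ℂ) x‖ ^ (2 : ℝ≥0∞).toReal :=
  (memℓp_gen_iff two_toReal_pos).1 (lp.memℓp ξ)

lemma memℓp_sfun {j k : α → X} (hj : Injective j) (hk : Injective k) (ξ : H) :
    Memℓp (sfun j k ξ) 2 := by
  apply memℓp_gen
  rw [norm_sfun_rpow hj]
  have hcomp := (summable_comp_inj (summable_norm_ξ ξ)
    (fun x => Real.rpow_nonneg (norm_nonneg _) _) hk).1
  exact ⟨_, (hasSum_extend_zero hj).2 hcomp.hasSum⟩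

lemma tsum_sfun_le {j k : α → X} (hj : Injective j) (hk : Injective k) (ξ : H) :
    ∑' y, ‖sfun j k (ξ : X → ℂ) y‖ ^ (2 : ℝ≥0∞).toReal ≤
      ∑' x, ‖(ξ : X → ℂ) x‖ ^ (2 : ℝ≥0∞).toReal := by
  obtain ⟨hcomp, hle⟩ := summable_comp_inj (summable_norm_ξ ξ)
    (fun x => Real.rpow_nonneg (norm_nonneg _) _) hk
  calc ∑' y, ‖sfun j k (ξ : X → ℂ) y‖ ^ (2 : ℝ≥0∞).toReal
      = ∑' a, ‖(ξ : X → ℂ) (k a)‖ ^ (2 : ℝ≥0∞).toReal := by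
        rw [norm_sfun_rpow hj]
        rw [← Function.Injective.tsum_eq hj (support_extend_zero j _)]
        exact tsum_congr fun a => by rw [hj.extend_apply]
    _ ≤ _ := hle

noncomputable def sOpL (j k : α → X) (hj : Injective j) (hk : Injective k) :
    H →ₗ[ℂ] H where
  toFun ξ := ⟨sfun j k ξ, memℓp_sfun hj hk ξ⟩
  map_add' ξ η := by
    apply Subtype.ext
    funext y
    have h1 : ((ξ + η : H) : X → ℂ) = (ξ : X → ℂ) + (η : X → ℂ) := lp.coeFn_add ξ η
    show sfun j k ((ξ + η : H) : X → ℂ) y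
        = sfun j k (ξ : X → ℂ) y + sfun j k (η : X → ℂ) y
    by_cases hy : y ∈ Set.range j
    · obtain ⟨a, rfl⟩ := hy
      rw [sfun_apply_j hj, sfun_apply_j hj, sfun_apply_j hj, h1]
      rfl
    · rw [sfun_apply_notMem _ _ hy, sfun_apply_notMem _ _ hy, sfun_apply_notMem _ _ hy]
      ring
  map_smul' cz ξ := by
    apply Subtype.ext
    funext y
    have h1 : ((cz • ξ : H) : X → ℂ) = cz • (ξ : X → ℂ) := lp.coeFn_smul cz ξ
    show sfun j k ((cz • ξ : H) : X → ℂ) y = cz • sfun j k (ξ : X → ℂ) y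
    by_cases hy : y ∈ Set.range j
    · obtain ⟨a, rfl⟩ := hy
      rw [sfun_apply_j hj, sfun_apply_j hj, h1]
      rfl
    · rw [sfun_apply_notMem _ _ hy, sfun_apply_notMem _ _ hy]
      simp
noncomputable def sOp (j k : α → X) (hj : Injective j) (hk : Injective k) :
    H →L[ℂ] H :=
  LinearMap.mkContinuous (sOpL j k hj hk) 1 (by
    intro ξ
    rw [one_mul]
    have h1 := lp.norm_rpow_eq_tsum two_toReal_pos (sOpL j k hj hk ξ)
    have h2 := lp.norm_rpow_eq_tsum two_toReal_pos ξ
    have h3 : ‖sOpL j k hj hk ξ‖ ^ (2 : ℝ≥0∞).toReal ≤ ‖ξ‖ ^ (2 : ℝ≥0∞).toReal := by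
      rw [h1, h2]
      exact tsum_sfun_le hj hk ξ
    exact (Real.rpow_le_rpow_iff (norm_nonneg _) (norm_nonneg _) two_toReal_pos).1 h3)

@[simp] lemma sOp_coe (j k : α → X) (hj : Injective j) (hk : Injective k) (ξ : H) :
    ((sOp j k hj hk ξ) : X → ℂ) = sfun j k (ξ : X → ℂ) := rfl

lemma star_sOp (j k : α → X) (hj : Injective j) (hk : Injective k) :
    star (sOp j k hj hk) = sOp k j hk hj := by
  have key : ∀ ξ η : H,
      @inner ℂ _ _ ((sOp k j hk hj) ξ) η = @inner ℂ _ _ ξ ((sOp j k hj hk) η) := by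
    intro ξ η
    rw [lp.inner_eq_tsum, lp.inner_eq_tsum]
    have hs1 : Function.support
        (fun y => @inner ℂ ℂ _ ((sOp k j hk hj ξ : X → ℂ) y) ((η : X → ℂ) y)) ⊆
          Set.range k := by
      intro y hy
      by_contra h
      apply hy
      simp only [sOp_coe, sfun_apply_notMem _ _ h, inner_zero_left]
    have hs2 : Function.support
        (fun y => @inner ℂ ℂ _ ((ξ : X → ℂ) y) ((sOp j k hj hk η : X → ℂ) y)) ⊆
          Set.range j := by
      intro y hy
      by_contra h
      apply hy
      simp only [sOp_coe, sfun_apply_notMem _ _ h, inner_zero_right]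
    rw [← Function.Injective.tsum_eq hk hs1, ← Function.Injective.tsum_eq hj hs2]
    exact tsum_congr fun a => by
      simp only [sOp_coe, sfun_apply_j hk, sfun_apply_j hj]
  rw [ContinuousLinearMap.star_eq_adjoint]
  exact ((ContinuousLinearMap.eq_adjoint_iff _ _).2 key).symm
end gadget

section graph

open Function
open scoped Classical

variable {V E : Type} (s r : E → V)

local notation "XX" => BPath V E s r
local notation "HG" => lp (fun _ : BPath V E s r => ℂ) 2
local notation "BG" =>
  (lp (fun _ : BPath V E s r => ℂ) 2) →L[ℂ] (lp (fun _ : BPath V E s r => ℂ) 2)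

/-- Projection onto paths based at `v`. -/
noncomputable def Pv (v : V) : BG :=
  sOp (Subtype.val : {y : XX // y.v = v} → XX) Subtype.val
    Subtype.val_injective Subtype.val_injective

/-- The partial isometry prepending edge `e`. -/
noncomputable def Se (e : E) : BG :=
  sOp (consMap e) (Subtype.val : {b : XX // b.v = s e} → XX)
    (consMap_injective e) Subtype.val_injective

lemma Pv_apply (v : V) (ξ : HG) (y : XX) :
    (Pv s r v ξ : XX → ℂ) y = if y.v = v then (ξ : XX → ℂ) y else 0 := by
  rw [Pv, sOp_coe]
  by_cases h : y.v = v
  · rw [if_pos h]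
    exact sfun_apply_j Subtype.val_injective _ _ ⟨y, h⟩
  · rw [if_neg h]
    exact sfun_apply_notMem _ _ (by simpa [Subtype.range_coe_subtype] using h)

lemma Se_apply (e : E) (ξ : HG) (y : XX) :
    (Se s r e ξ : XX → ℂ) y =
      if h : y.fn 0 = some e then (ξ : XX → ℂ) (tail y e h) else 0 := by
  rw [Se, sOp_coe]
  by_cases h : y.fn 0 = some e
  · rw [dif_pos h]
    have hy : consMap e ⟨tail y e h, rfl⟩ = y := cons_tail y e h
    conv_lhs => rw [← hy]
    exact sfun_apply_j (consMap_injective e) _ _ ⟨tail y e h, rfl⟩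
  · rw [dif_neg h]
    exact sfun_apply_notMem _ _ (fun hr => h (mem_range_consMap.1 hr))

lemma star_Se (e : E) :
    star (Se s r e) = sOp (Subtype.val : {b : XX // b.v = s e} → XX) (consMap e)
      Subtype.val_injective (consMap_injective e) :=
  star_sOp _ _ _ _

lemma starSe_apply (e : E) (ξ : HG) (b : XX) :
    ((star (Se s r e)) ξ : XX → ℂ) b =
      if h : b.v = s e then (ξ : XX → ℂ) (cons e b h) else 0 := by
  rw [star_Se, sOp_coe]
  by_cases h : b.v = s e
  · rw [dif_pos h]
    exact sfun_apply_j Subtype.val_injective _ _ ⟨b, h⟩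
  · rw [dif_neg h]
    exact sfun_apply_notMem _ _ (by simpa [Subtype.range_coe_subtype] using h)

lemma star_Pv (v : V) : star (Pv s r v) = Pv s r v := star_sOp _ _ _ _

variable [Fintype V] [Fintype E] [DecidableEq V]

/-- The concrete Cuntz–Krieger family on the boundary path space. -/
noncomputable def Q0 : CKFamily V E s r
    ((lp (fun _ : BPath V E s r => ℂ) 2) →L[ℂ] (lp (fun _ : BPath V E s r => ℂ) 2)) where
  p v := Pv s r v
  se e := Se s r e
  proj_idem v := by
    refine ContinuousLinearMap.ext fun ξ => Subtype.ext (funext fun y => ?_)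
    rw [ContinuousLinearMap.mul_apply]
    simp only [Pv_apply]
    by_cases h : y.v = v <;> simp [h]
  proj_star v := star_Pv s r v
  orth v w hvw := by
    refine ContinuousLinearMap.ext fun ξ => Subtype.ext (funext fun y => ?_)
    rw [ContinuousLinearMap.mul_apply]
    simp only [Pv_apply]
    by_cases h : y.v = v
    · rw [if_pos h, if_neg (fun hw : y.v = w => hvw (h.symm.trans hw))]
      rfl
    · rw [if_neg h]
      rfl
  ck1 e := by
    refine ContinuousLinearMap.ext fun ξ => Subtype.ext (funext fun y => ?_)
    rw [ContinuousLinearMap.mul_apply, starSe_apply, Pv_apply]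
    by_cases h : y.v = s e
    · rw [dif_pos h, if_pos h, Se_apply, dif_pos (cons_fn_zero e y h)]
      exact congrArg _ (tail_cons e y h)
    · rw [dif_neg h, if_neg h]
  ck2 v hv := by
    refine ContinuousLinearMap.ext fun ξ => Subtype.ext (funext fun y => ?_)
    have hsum : ((∑ e ∈ Finset.univ.filter (fun e => r e = v),
        Se s r e * star (Se s r e)) ξ : XX → ℂ) y
        = ∑ e ∈ Finset.univ.filter (fun e => r e = v),
            ((Se s r e * star (Se s r e)) ξ : XX → ℂ) y := by
      rw [ContinuousLinearMap.sum_apply, lp.coeFn_sum, Finset.sum_apply]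
    rw [hsum, Pv_apply]
    have hterm : ∀ e, ((Se s r e * star (Se s r e)) ξ : XX → ℂ) y
        = if y.fn 0 = some e then (ξ : XX → ℂ) y else 0 := by
      intro e
      rw [ContinuousLinearMap.mul_apply, Se_apply]
      by_cases h : y.fn 0 = some e
      · rw [dif_pos h, if_pos h, starSe_apply, dif_pos (tail_v y e h)]
        exact congrArg _ (cons_tail y e h)
      · rw [dif_neg h, if_neg h]
    rw [Finset.sum_congr rfl (fun e _ => hterm e)]
    cases hy0 : y.fn 0 with
    | none =>
      rw [Finset.sum_eq_zero (fun e _ => if_neg (fun hne : (none : Option E) = some e => by cases hne)),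
        if_neg (fun hyv : y.v = v =>
          y.hstart hy0 hv.choose (hv.choose_spec.trans hyv.symm))]
    | some e0 =>
      have hre0 : r e0 = y.v := y.h0 e0 hy0
      have h2 : ∀ e ∈ Finset.univ.filter (fun e => r e = v),
          (if some e0 = some e then (ξ : XX → ℂ) y else 0)
            = if e0 = e then (ξ : XX → ℂ) y else 0 := by
        intro e _
        simp only [Option.some.injEq]
      rw [Finset.sum_congr rfl h2]
      simp only [Finset.sum_ite_eq]
      by_cases h : y.v = v
      · rw [if_pos h]
        have hm : e0 ∈ Finset.univ.filter (fun e => r e = v) :=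
          Finset.mem_filter.2 ⟨Finset.mem_univ e0, hre0.trans h⟩
        rw [if_pos hm]
      · rw [if_neg h]
        have hm : e0 ∉ Finset.univ.filter (fun e => r e = v) :=
          fun hm => h (hre0.symm.trans (Finset.mem_filter.1 hm).2)
        rw [if_neg hm]
  sum_p := by
    refine ContinuousLinearMap.ext fun ξ => Subtype.ext (funext fun y => ?_)
    have hsum : ((∑ v, Pv s r v) ξ : XX → ℂ) y = ∑ v, (Pv s r v ξ : XX → ℂ) y := by
      rw [ContinuousLinearMap.sum_apply, lp.coeFn_sum, Finset.sum_apply]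
    rw [hsum]
    rw [Finset.sum_congr rfl (fun v _ => Pv_apply s r v ξ y)]
    simp only [Finset.sum_ite_eq, Finset.mem_univ, if_true]
    rw [ContinuousLinearMap.one_apply]

lemma Se_ne_zero (f : E) : Se s r f ≠ 0 := by
  intro h
  have hb : (somePath s r (s f)).v = s f := rfl
  set b0 : XX := somePath s r (s f) with hb0
  set y0 : XX := cons f b0 hb with hy0
  let ξ0 : lp (fun _ : BPath V E s r => ℂ) 2 := lp.single 2 b0 (1 : ℂ)
  have h1 : (Se s r f ξ0 : XX → ℂ) y0 = 1 := by
    rw [Se_apply, dif_pos (cons_fn_zero f b0 hb)]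
    have h2 : tail y0 f (cons_fn_zero f b0 hb) = b0 := tail_cons f b0 hb
    rw [h2]
    show ((lp.single 2 b0 (1 : ℂ) : lp (fun _ : BPath V E s r => ℂ) 2) : XX → ℂ) b0 = 1
    exact lp.single_apply_self (E := fun _ : BPath V E s r => ℂ) 2 b0 (1 : ℂ)
  rw [h, ContinuousLinearMap.zero_apply] at h1
  simp at h1

end graph

/-- Push a CK family forward along a star algebra homomorphism. -/
def mapFamily {V E : Type} [Fintype V] [Fintype E] [DecidableEq V] {s r : E → V}
    {A B : Type*} [Ring A] [Algebra ℂ A] [StarRing A]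
    [Ring B] [Algebra ℂ B] [StarRing B]
    (π : A →⋆ₐ[ℂ] B) (F : CKFamily V E s r A) : CKFamily V E s r B where
  p v := π (F.p v)
  se e := π (F.se e)
  proj_idem v := by rw [← map_mul, F.proj_idem]
  proj_star v := by rw [← map_star, F.proj_star]
  orth v w h := by rw [← map_mul, F.orth v w h, map_zero]
  ck1 e := by rw [← map_star, ← map_mul, F.ck1]
  ck2 v hv := by
    show π (F.p v) = _
    rw [F.ck2 v hv, map_sum]
    exact Finset.sum_congr rfl fun e _ => by rw [map_mul, map_star]
  sum_p := by rw [← map_sum, F.sum_p, map_one]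

/-- The key trace computation: a faithful positive tracial functional kills the
partial isometry of an entry to a cycle. -/
lemma core_trace {V E : Type} [Fintype V] [Fintype E] [DecidableEq V]
    (s r : E → V) {B : Type*} [Ring B] [Algebra ℂ B] [StarRing B]
    (Q : CKFamily V E s r B) (τ : B →ₗ[ℂ] ℂ)
    (hpos : ∀ a : B, 0 ≤ (τ (star a * a)).re ∧ (τ (star a * a)).im = 0)
    (htr : ∀ a b : B, τ (a * b) = τ (b * a))
    (hfa : ∀ a : B, τ (star a * a) = 0 → a = 0)
    {n : ℕ} (c : ZMod n → E) (hc : IsGraphCycle s r n c)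
    (f : E) (hf : f ∉ Set.range c) (hrf : r f ∈ r '' Set.range c) :
    Q.se f = 0 := by
  classical
  haveI : NeZero n := ⟨hc.1.ne'⟩
  set a : E → ℝ := fun e => (τ (Q.se e * star (Q.se e))).re with ha
  have hps : ∀ e : E, τ (Q.se e * star (Q.se e)) = τ (Q.p (s e)) := by
    intro e
    rw [htr, Q.ck1]
  have han : ∀ e, 0 ≤ a e ∧ (τ (Q.se e * star (Q.se e))).im = 0 := by
    intro e
    have h := hpos (star (Q.se e))
    rwa [star_star] at h
  set t : ZMod n → ℝ := fun i => (τ (Q.p (r (c i)))).re with ht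
  have hsum : ∀ i : ZMod n,
      t i = ∑ e ∈ Finset.univ.filter (fun e => r e = r (c i)), a e := by
    intro i
    rw [ht]
    simp only []
    rw [Q.ck2 (r (c i)) ⟨c i, rfl⟩, map_sum, Complex.re_sum]
  have hstep : ∀ i : ZMod n, a (c i) = t (i - 1) := by
    intro i
    have h1 : s (c i) = r (c (i - 1)) := by
      have h := hc.2 (i - 1)
      rwa [sub_add_cancel] at h
    rw [ha]
    simp only []
    rw [hps (c i), h1]
  obtain ⟨x, ⟨i0, rfl⟩, hri0⟩ := hrf
  have hkey : ∀ i : ZMod n, t (i - 1) + (if i = i0 then a f else 0) ≤ t i := by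
    intro i
    rw [hsum i]
    by_cases hi : i = i0
    · subst hi
      rw [if_pos rfl]
      have hfs : ({c i, f} : Finset E) ⊆
          Finset.univ.filter (fun e => r e = r (c i)) := by
        intro e he
        rcases Finset.mem_insert.1 he with rfl | he
        · exact Finset.mem_filter.2 ⟨Finset.mem_univ _, rfl⟩
        · rw [Finset.mem_singleton.1 he]
          exact Finset.mem_filter.2 ⟨Finset.mem_univ _, hri0.symm⟩
      have hne : c i ≠ f := fun hce => hf ⟨i, hce⟩
      calc t (i - 1) + a f = ∑ e ∈ ({c i, f} : Finset E), a e := by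
            rw [Finset.sum_pair hne, hstep]
        _ ≤ _ := Finset.sum_le_sum_of_subset_of_nonneg hfs (fun e _ _ => (han e).1)
    · rw [if_neg hi, add_zero, ← hstep i]
      have hfs : ({c i} : Finset E) ⊆
          Finset.univ.filter (fun e => r e = r (c i)) := by
        intro e he
        rw [Finset.mem_singleton.1 he]
        exact Finset.mem_filter.2 ⟨Finset.mem_univ _, rfl⟩
      calc a (c i) = ∑ e ∈ ({c i} : Finset E), a e := (Finset.sum_singleton _ _).symm
        _ ≤ _ := Finset.sum_le_sum_of_subset_of_nonneg hfs (fun e _ _ => (han e).1)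
  have hle : ∑ i : ZMod n, (t (i - 1) + (if i = i0 then a f else 0))
      ≤ ∑ i : ZMod n, t i := Finset.sum_le_sum (fun i _ => hkey i)
  rw [Finset.sum_add_distrib] at hle
  have h1 : ∑ i : ZMod n, (if i = i0 then a f else 0) = a f := by
    rw [Finset.sum_ite_eq' Finset.univ i0 (fun _ => a f)]
    simp
  have h2 : ∑ i : ZMod n, t (i - 1) = ∑ i : ZMod n, t i :=
    Fintype.sum_equiv (Equiv.subRight (1 : ZMod n)) _ _ (fun i => rfl)
  rw [h1, h2] at hle
  have haf : a f = 0 := le_antisymm (by linarith) (han f).1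
  have hτ0 : τ (Q.se f * star (Q.se f)) = 0 := by
    apply Complex.ext
    · exact haf
    · exact (han f).2
  have hsf : star (Q.se f) = 0 := by
    apply hfa (star (Q.se f))
    rwa [star_star]
  exact star_eq_zero.1 hsf

/-- trace of `star a * a` for complex matrices. -/
lemma trace_star_mul_self (m : ℕ) (a : Matrix (Fin m) (Fin m) ℂ) :
    Matrix.trace (star a * a)
      = ((∑ i, ∑ j, Complex.normSq (a j i) : ℝ) : ℂ) := by
  have h1 : Matrix.trace (star a * a) = ∑ i, ∑ j, (star a) i j * a j i := by
    simp [Matrix.trace, Matrix.diag, Matrix.mul_apply]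
  rw [h1]
  push_cast
  refine Finset.sum_congr rfl fun i _ => Finset.sum_congr rfl fun j _ => ?_
  rw [Matrix.star_apply, mul_comm, Complex.star_def, Complex.mul_conj]

lemma mat_pos (m : ℕ) (a : Matrix (Fin m) (Fin m) ℂ) :
    0 ≤ ((Matrix.traceLinearMap (Fin m) ℂ ℂ) (star a * a)).re ∧
      ((Matrix.traceLinearMap (Fin m) ℂ ℂ) (star a * a)).im = 0 := by
  have h : (Matrix.traceLinearMap (Fin m) ℂ ℂ) (star a * a)
      = ((∑ i, ∑ j, Complex.normSq (a j i) : ℝ) : ℂ) := trace_star_mul_self m a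
  rw [h]
  constructor
  · rw [Complex.ofReal_re]
    exact Finset.sum_nonneg fun i _ => Finset.sum_nonneg fun j _ => Complex.normSq_nonneg _
  · exact Complex.ofReal_im _

lemma mat_tr (m : ℕ) (a b : Matrix (Fin m) (Fin m) ℂ) :
    (Matrix.traceLinearMap (Fin m) ℂ ℂ) (a * b)
      = (Matrix.traceLinearMap (Fin m) ℂ ℂ) (b * a) :=
  Matrix.trace_mul_comm a b

lemma mat_fa (m : ℕ) (a : Matrix (Fin m) (Fin m) ℂ)
    (h : (Matrix.traceLinearMap (Fin m) ℂ ℂ) (star a * a) = 0) : a = 0 := by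
  replace h : Matrix.trace (star a * a) = (0 : ℂ) := h
  rw [trace_star_mul_self m a, Complex.ofReal_eq_zero] at h
  have h2 : ∀ j i, Complex.normSq (a j i) = 0 := by
    intro j i
    have hi := (Finset.sum_eq_zero_iff_of_nonneg
      (fun i _ => Finset.sum_nonneg fun j _ => Complex.normSq_nonneg (a j i))).1 h i
      (Finset.mem_univ i)
    exact (Finset.sum_eq_zero_iff_of_nonneg
      (fun j _ => Complex.normSq_nonneg (a j i))).1 hi j (Finset.mem_univ j)
  ext j i
  simpa using Complex.normSq_eq_zero.1 (h2 j i)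

end NoTraceAux

/-- Let `G` be a finite directed graph containing a cycle `c` with an entry
(an edge `f` not on `c` whose range is a vertex of `c`).  Then the graph
C*-algebra `C*(G)` admits no faithful tracial state, and consequently `C*(G)`
is not residually finite-dimensional. -/
theorem no_faithful_trace_of_cycle_with_entry
    (V E : Type) [Fintype V] [Fintype E] [DecidableEq V] (s r : E → V)
    (CG : Type) [NormedRing CG] [StarRing CG] [CStarRing CG] [NormedAlgebra ℂ CG]
    [StarModule ℂ CG] [CompleteSpace CG]
    (F : CKFamily V E s r CG) (hF : IsUniversalCKFamily V E s r CG F)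
    {n : ℕ} (c : ZMod n → E) (hc : IsGraphCycle s r n c)
    (f : E) (hf : f ∉ Set.range c) (hrf : r f ∈ r '' Set.range c) :
    (¬ ∃ τ : CG →ₗ[ℂ] ℂ,
        τ 1 = 1 ∧
        (∀ a : CG, 0 ≤ (τ (star a * a)).re ∧ (τ (star a * a)).im = 0) ∧
        (∀ a b : CG, τ (a * b) = τ (b * a)) ∧
        (∀ a : CG, τ (star a * a) = 0 → a = 0)) ∧
    ¬ (∀ d : CG, d ≠ 0 →
        ∃ (m : ℕ) (π : CG →⋆ₐ[ℂ] Matrix (Fin m) (Fin m) ℂ), π d ≠ 0) := by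
  classical
  obtain ⟨φ, ⟨hφp, hφe⟩, -⟩ := hF
    ((lp (fun _ : NoTraceAux.BPath V E s r => ℂ) 2) →L[ℂ]
      (lp (fun _ : NoTraceAux.BPath V E s r => ℂ) 2))
    (NoTraceAux.Q0 s r)
  have hne : F.se f ≠ 0 := by
    intro h0
    have h1 := hφe f
    rw [h0, map_zero] at h1
    exact NoTraceAux.Se_ne_zero s r f h1.symm
  refine ⟨?_, ?_⟩
  · rintro ⟨τ, -, hpos, htr, hfa⟩
    exact hne (NoTraceAux.core_trace s r F τ hpos htr hfa c hc f hf hrf)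
  · intro hres
    obtain ⟨m, π, hπ⟩ := hres (F.se f) hne
    exact hπ (NoTraceAux.core_trace s r (NoTraceAux.mapFamily π F)
      (Matrix.traceLinearMap (Fin m) ℂ ℂ) (NoTraceAux.mat_pos m) (NoTraceAux.mat_tr m)
      (NoTraceAux.mat_fa m) c hc f hf hrf)
end

section
/- Let G = G₁ ∪ G₂ be a directed graph with finitely many vertices, sharing n vertices, no shared edges, with no edge of G₂ entering G₁ and G₂^0 = G^0. Then C*(G) ≅ (C*(G₁) ⊕ ℂ) *_{ℂ^{n+1}} C*(G₂), where the amalgamation is via the unital embeddings θ₁(λ₁,...,λ_{n+1}) = (Σ_{i=1}^n λᵢ p̄ᵢ, λ_{n+1}) into C*(G₁) ⊕ ℂ and θ₂(λ₁,...,λ_{n+1}) = Σ_{i=1}^n λᵢ p̿ᵢ + λ_{n+1} Σ_β p̿_β into C*(G₂), where p₁,...,p_n are the shared vertices and the p_β are vertices of G₂ not in G₁. -/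
set_option linter.unusedSectionVars false
set_option maxHeartbeats 1000000

open scoped Matrix.Norms.L2Operator

/-- `(C, i₁, i₂)` is the unital full amalgamated free product of `A₁` and `A₂`
over `D` (along the unital embeddings `θ₁, θ₂`): the canonical maps satisfy
`i₁ ∘ θ₁ = i₂ ∘ θ₂`, and every pair of unital *-homomorphisms into a unital
C*-algebra agreeing on `D` factors uniquely through `C`. -/
def IsAmalgamatedFreeProduct
    {D A₁ A₂ C : Type*}
    [Ring D] [Algebra ℂ D] [StarRing D] [Ring A₁] [Algebra ℂ A₁] [StarRing A₁]
    [Ring A₂] [Algebra ℂ A₂] [StarRing A₂] [Ring C] [Algebra ℂ C] [StarRing C]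
    (θ₁ : D →⋆ₐ[ℂ] A₁) (θ₂ : D →⋆ₐ[ℂ] A₂)
    (i₁ : A₁ →⋆ₐ[ℂ] C) (i₂ : A₂ →⋆ₐ[ℂ] C) : Prop :=
  i₁.comp θ₁ = i₂.comp θ₂ ∧
  ∀ (B : Type) [NormedRing B] [StarRing B] [CStarRing B] [NormedAlgebra ℂ B]
    [StarModule ℂ B] [CompleteSpace B]
    (π₁ : A₁ →⋆ₐ[ℂ] B) (π₂ : A₂ →⋆ₐ[ℂ] B), π₁.comp θ₁ = π₂.comp θ₂ →
      ∃! π : C →⋆ₐ[ℂ] B, π.comp i₁ = π₁ ∧ π.comp i₂ = π₂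

/-! ### Auxiliary C*-algebra lemmas -/

section CStarLemmas

variable {B : Type*} [NonUnitalNormedRing B] [StarRing B] [CStarRing B]

/-- If `star a * a` is idempotent then `a * (star a * a) = a`. -/
lemma mul_star_mul_self_idem (a : B)
    (h : (star a * a) * (star a * a) = star a * a) : a * (star a * a) = a := by
  have h' : star a * (a * (star a * a)) = star a * a := by
    simpa [mul_assoc] using h
  have key : star (a * (star a * a) - a) * (a * (star a * a) - a) = 0 := by
    simp only [star_sub, star_mul, star_star, sub_mul, mul_sub, mul_assoc, h']
    abel
  have := (CStarRing.star_mul_self_eq_zero_iff _).mp key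
  rwa [sub_eq_zero] at this

end CStarLemmas

section Orth

variable {B : Type*} [NormedRing B] [StarRing B] [CStarRing B]
  [NormedAlgebra ℂ B] [StarModule ℂ B] [CompleteSpace B]

/-- Projections summing to a projection are mutually orthogonal. -/
lemma proj_sum_orth {ι : Type*} [DecidableEq ι] (t : Finset ι) (q : ι → B)
    (hidem : ∀ i ∈ t, q i * q i = q i) (hsa : ∀ i ∈ t, star (q i) = q i)
    (hsum : (∑ i ∈ t, q i) * (∑ i ∈ t, q i) = ∑ i ∈ t, q i) :
    ∀ i ∈ t, ∀ j ∈ t, i ≠ j → q i * q j = 0 := by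
  letI : CStarAlgebra B := ⟨⟩
  letI := CStarAlgebra.spectralOrder B
  haveI := CStarAlgebra.spectralOrderedRing B
  set Pn := ∑ i ∈ t, q i with hPn
  have step1 : ∀ i ∈ t, q i * Pn = q i := by
    have hzero : ∑ i ∈ t, star (q i * (1 - Pn)) * (q i * (1 - Pn)) = 0 := by
      have hterm : ∀ i ∈ t, star (q i * (1 - Pn)) * (q i * (1 - Pn))
          = (1 - Pn) * q i * (1 - Pn) := by
        intro i hi
        have hs1 : star (1 - Pn) = 1 - Pn := by
          rw [star_sub, star_one, hPn, star_sum,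
            Finset.sum_congr rfl (fun i hi => hsa i hi)]
        rw [star_mul, hs1, hsa i hi, mul_assoc, ← mul_assoc (q i) (q i),
          hidem i hi, ← mul_assoc]
      rw [Finset.sum_congr rfl hterm]
      have : ∑ i ∈ t, (1 - Pn) * q i * (1 - Pn)
          = (1 - Pn) * Pn * (1 - Pn) := by
        rw [hPn, ← Finset.sum_mul, ← Finset.mul_sum]
      rw [this, sub_mul, one_mul, hsum, sub_self, zero_mul]
    intro i hi
    have hnn : ∀ j ∈ t, (0 : B) ≤ star (q j * (1 - Pn)) * (q j * (1 - Pn)) :=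
      fun j _ => star_mul_self_nonneg _
    have h0 := (Finset.sum_eq_zero_iff_of_nonneg hnn).mp hzero i hi
    have hz := (CStarRing.star_mul_self_eq_zero_iff _).mp h0
    have : q i * 1 - q i * Pn = 0 := by rw [← mul_sub]; exact hz
    rw [mul_one, sub_eq_zero] at this
    exact this.symm
  have claim : ∀ i ∈ t, ∀ k ∈ t.erase i, q k * q i = 0 := by
    intro i hi
    have expand : ∑ k ∈ t, q i * q k = q i := by
      rw [← Finset.mul_sum, ← hPn, step1 i hi]
    have h0 : ∑ k ∈ t.erase i, q i * q k = 0 := by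
      have h1 := Finset.add_sum_erase t (fun k => q i * q k) hi
      simp only [hidem i hi, expand] at h1
      exact (add_eq_left).mp h1
    have h0' : ∑ k ∈ t.erase i, q i * (q k * q i) = 0 := by
      have := congrArg (· * q i) h0
      simpa [Finset.sum_mul, mul_assoc] using this
    have hterm : ∀ k ∈ t.erase i,
        q i * (q k * q i) = star (q k * q i) * (q k * q i) := by
      intro k hk
      have hk' := Finset.mem_of_mem_erase hk
      rw [star_mul, hsa i hi, hsa k hk', mul_assoc,
        ← mul_assoc (q k) (q k) (q i), hidem k hk']
    rw [Finset.sum_congr rfl hterm] at h0'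
    have hnn : ∀ k ∈ t.erase i, (0 : B) ≤ star (q k * q i) * (q k * q i) :=
      fun k _ => star_mul_self_nonneg _
    intro k hk
    exact (CStarRing.star_mul_self_eq_zero_iff _).mp
      ((Finset.sum_eq_zero_iff_of_nonneg hnn).mp h0' k hk)
  intro i hi j hj hij
  exact claim j hj i (Finset.mem_erase.mpr ⟨hij, hi⟩)

end Orth

section SumOrth

/-- Sum of pairwise orthogonal idempotents is idempotent. -/
lemma sum_orth_idem {ι A : Type*} [NonUnitalNonAssocSemiring A] [DecidableEq ι]
    (t : Finset ι) (p : ι → A)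
    (hidem : ∀ i ∈ t, p i * p i = p i)
    (horth : ∀ i ∈ t, ∀ j ∈ t, i ≠ j → p i * p j = 0) :
    (∑ i ∈ t, p i) * (∑ i ∈ t, p i) = ∑ i ∈ t, p i := by
  rw [Finset.sum_mul_sum]
  refine Finset.sum_congr rfl fun i hi => ?_
  rw [Finset.sum_eq_single_of_mem i hi (fun j hj hji => horth i hi j hj hji.symm)]
  exact hidem i hi

/-- Sum over a filter on a sum type reducing to the left component. -/
lemma sum_filter_inl {E₁ E₂ M : Type*} [Fintype E₁] [Fintype E₂] [AddCommMonoid M]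
    (Pp : E₁ ⊕ E₂ → Prop) [DecidablePred Pp] (P₁ : E₁ → Prop) [DecidablePred P₁]
    (h1 : ∀ e, Pp (Sum.inl e) ↔ P₁ e) (h2 : ∀ e, ¬ Pp (Sum.inr e))
    (g : E₁ ⊕ E₂ → M) :
    ∑ e ∈ Finset.univ.filter Pp, g e
      = ∑ e ∈ Finset.univ.filter P₁, g (Sum.inl e) := by
  rw [Finset.sum_filter, Finset.sum_filter, Fintype.sum_sum_type]
  have hz : ∑ e : E₂, (if Pp (Sum.inr e) then g (Sum.inr e) else 0) = 0 :=
    Finset.sum_eq_zero fun e _ => if_neg (h2 e)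
  rw [hz, add_zero]
  exact Finset.sum_congr rfl fun e _ => by
    by_cases h : P₁ e
    · rw [if_pos ((h1 e).mpr h), if_pos h]
    · rw [if_neg (fun hh => h ((h1 e).mp hh)), if_neg h]

/-- Sum over a filter on a sum type reducing to the right component. -/
lemma sum_filter_inr {E₁ E₂ M : Type*} [Fintype E₁] [Fintype E₂] [AddCommMonoid M]
    (Pp : E₁ ⊕ E₂ → Prop) [DecidablePred Pp] (P₂ : E₂ → Prop) [DecidablePred P₂]
    (h1 : ∀ e, Pp (Sum.inr e) ↔ P₂ e) (h2 : ∀ e, ¬ Pp (Sum.inl e))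
    (g : E₁ ⊕ E₂ → M) :
    ∑ e ∈ Finset.univ.filter Pp, g e
      = ∑ e ∈ Finset.univ.filter P₂, g (Sum.inr e) := by
  rw [Finset.sum_filter, Finset.sum_filter, Fintype.sum_sum_type]
  have hz : ∑ e : E₁, (if Pp (Sum.inl e) then g (Sum.inl e) else 0) = 0 :=
    Finset.sum_eq_zero fun e _ => if_neg (h2 e)
  rw [hz, zero_add]
  exact Finset.sum_congr rfl fun e _ => by
    by_cases h : P₂ e
    · rw [if_pos ((h1 e).mpr h), if_pos h]
    · rw [if_neg (fun hh => h ((h1 e).mp hh)), if_neg h]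

end SumOrth

/-! ### Consequences of the Cuntz–Krieger relations -/

namespace CKFamily

variable {V E : Type} [Fintype V] [Fintype E] [DecidableEq V]
  {s r : E → V} {B : Type*} [NormedRing B] [StarRing B] [CStarRing B]
  [NormedAlgebra ℂ B] [StarModule ℂ B] [CompleteSpace B]
  (Q : CKFamily V E s r B)

lemma se_mul_p (e : E) : Q.se e * Q.p (s e) = Q.se e := by
  have h : (star (Q.se e) * Q.se e) * (star (Q.se e) * Q.se e)
      = star (Q.se e) * Q.se e := by
    rw [Q.ck1]; exact Q.proj_idem _
  have := mul_star_mul_self_idem _ h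
  rwa [Q.ck1] at this

lemma se_mul_p_ne (e : E) (w : V) (hw : w ≠ s e) : Q.se e * Q.p w = 0 := by
  rw [← Q.se_mul_p e, mul_assoc, Q.orth _ _ (Ne.symm hw), mul_zero]

lemma q_idem (e : E) : (Q.se e * star (Q.se e)) * (Q.se e * star (Q.se e))
    = Q.se e * star (Q.se e) := by
  rw [mul_assoc, ← mul_assoc (star (Q.se e)) (Q.se e), Q.ck1,
    ← mul_assoc, Q.se_mul_p]

lemma q_sa (e : E) : star (Q.se e * star (Q.se e)) = Q.se e * star (Q.se e) := by
  rw [star_mul, star_star]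

lemma q_orth (e f : E) (hr : r e = r f) (hef : e ≠ f) :
    (Q.se e * star (Q.se e)) * (Q.se f * star (Q.se f)) = 0 := by
  classical
  set t := Finset.univ.filter (fun g => r g = r e) with ht
  have hsum : (∑ g ∈ t, Q.se g * star (Q.se g)) * (∑ g ∈ t, Q.se g * star (Q.se g))
      = ∑ g ∈ t, Q.se g * star (Q.se g) := by
    rw [← Q.ck2 (r e) ⟨e, rfl⟩]; exact Q.proj_idem _
  exact proj_sum_orth t _ (fun g _ => Q.q_idem g) (fun g _ => Q.q_sa g) hsum
    e (by simp [ht]) f (by simp [ht, hr.symm]) hef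

lemma p_mul_se (e : E) : Q.p (r e) * Q.se e = Q.se e := by
  classical
  have hqe : Q.se e * star (Q.se e) * Q.se e = Q.se e := by
    rw [mul_assoc, Q.ck1, Q.se_mul_p]
  rw [Q.ck2 (r e) ⟨e, rfl⟩, Finset.sum_mul,
    Finset.sum_eq_single_of_mem e (by simp)]
  · exact hqe
  · intro f hf hfe
    have hrf : r f = r e := by simpa using (Finset.mem_filter.mp hf).2
    calc Q.se f * star (Q.se f) * Q.se e
        = (Q.se f * star (Q.se f) * (Q.se e * star (Q.se e))) * Q.se e := by
          rw [mul_assoc (Q.se f * star (Q.se f)) (Q.se e * star (Q.se e)) (Q.se e),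
            hqe]
      _ = 0 := by rw [Q.q_orth f e hrf hfe, zero_mul]

lemma p_mul_se_ne (w : V) (e : E) (hw : w ≠ r e) : Q.p w * Q.se e = 0 := by
  rw [← Q.p_mul_se e, ← mul_assoc, Q.orth w (r e) hw, zero_mul]

end CKFamily

/-! ### Corners of C*-algebras -/

section CornerConstruction

/-- A projection in a normed star ring. -/
structure CStarProjection (B : Type*) [NormedRing B] [StarRing B] : Type _ where
  q : B
  idem : q * q = q
  sa : star q = q

variable {B : Type*} [NormedRing B] [StarRing B] [CStarRing B]
  [NormedAlgebra ℂ B] [StarModule ℂ B] [CompleteSpace B]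

/-- The corner `q B q` of `B` by the projection `q`. -/
def Corner (P : CStarProjection B) : Type _ :=
  {x : B // P.q * x = x ∧ x * P.q = x}

namespace Corner

variable {P : CStarProjection B}

instance : Zero (Corner P) := ⟨⟨0, by simp⟩⟩
instance : Add (Corner P) :=
  ⟨fun x y => ⟨x.1 + y.1, by rw [mul_add, x.2.1, y.2.1], by rw [add_mul, x.2.2, y.2.2]⟩⟩
instance : Neg (Corner P) :=
  ⟨fun x => ⟨-x.1, by rw [mul_neg, x.2.1], by rw [neg_mul, x.2.2]⟩⟩
instance : Sub (Corner P) :=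
  ⟨fun x y => ⟨x.1 - y.1, by rw [mul_sub, x.2.1, y.2.1], by rw [sub_mul, x.2.2, y.2.2]⟩⟩
instance : Mul (Corner P) :=
  ⟨fun x y => ⟨x.1 * y.1, by rw [← mul_assoc, x.2.1], by rw [mul_assoc, y.2.2]⟩⟩
instance : SMul ℂ (Corner P) :=
  ⟨fun c x => ⟨c • x.1, by rw [mul_smul_comm, x.2.1], by rw [smul_mul_assoc, x.2.2]⟩⟩
instance : SMul ℕ (Corner P) :=
  ⟨fun n x => ⟨n • x.1, by rw [mul_smul_comm, x.2.1], by rw [smul_mul_assoc, x.2.2]⟩⟩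
instance : SMul ℤ (Corner P) :=
  ⟨fun n x => ⟨n • x.1, by rw [mul_smul_comm, x.2.1], by rw [smul_mul_assoc, x.2.2]⟩⟩
instance : One (Corner P) := ⟨⟨P.q, P.idem, P.idem⟩⟩
instance : Star (Corner P) :=
  ⟨fun x => ⟨star x.1,
    by simpa [star_mul, P.sa] using congrArg star x.2.2,
    by simpa [star_mul, P.sa] using congrArg star x.2.1⟩⟩

@[simp] lemma val_zero : (0 : Corner P).1 = 0 := rfl
@[simp] lemma val_add (x y : Corner P) : (x + y).1 = x.1 + y.1 := rfl
@[simp] lemma val_mul (x y : Corner P) : (x * y).1 = x.1 * y.1 := rfl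
@[simp] lemma val_neg (x : Corner P) : (-x).1 = -x.1 := rfl
@[simp] lemma val_sub (x y : Corner P) : (x - y).1 = x.1 - y.1 := rfl
@[simp] lemma val_smul (c : ℂ) (x : Corner P) : (c • x).1 = c • x.1 := rfl
@[simp] lemma val_one : (1 : Corner P).1 = P.q := rfl
@[simp] lemma val_star (x : Corner P) : (star x).1 = star x.1 := rfl

instance instNonUnitalRing : NonUnitalRing (Corner P) :=
  Function.Injective.nonUnitalRing Subtype.val Subtype.val_injective rfl
    (fun _ _ => rfl) (fun _ _ => rfl) (fun _ => rfl) (fun _ _ => rfl)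
    (fun _ _ => rfl) (fun _ _ => rfl)

instance instRing : Ring (Corner P) :=
  { instNonUnitalRing with
    one := 1
    one_mul := fun x => Subtype.ext (by simpa using x.2.1)
    mul_one := fun x => Subtype.ext (by simpa using x.2.2) }

/-- `Subtype.val` as an additive monoid hom. -/
def valAddHom : Corner P →+ B :=
  { toFun := Subtype.val, map_zero' := rfl, map_add' := fun _ _ => rfl }

noncomputable instance instModule : Module ℂ (Corner P) :=
  Function.Injective.module ℂ valAddHom Subtype.val_injective (fun _ _ => rfl)

noncomputable instance instAlgebra : Algebra ℂ (Corner P) :=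
  Algebra.ofModule (fun c x y => Subtype.ext (smul_mul_assoc c x.1 y.1))
    (fun c x y => Subtype.ext (mul_smul_comm c x.1 y.1))

instance instStarRing : StarRing (Corner P) where
  star := star
  star_involutive := fun x => Subtype.ext (star_star x.1)
  star_mul := fun x y => Subtype.ext (star_mul x.1 y.1)
  star_add := fun x y => Subtype.ext (star_add x.1 y.1)

instance instStarModule : StarModule ℂ (Corner P) :=
  ⟨fun c x => Subtype.ext (star_smul c x.1)⟩

noncomputable instance instNorm : Norm (Corner P) := ⟨fun x => ‖x.1‖⟩

@[simp] lemma norm_def (x : Corner P) : ‖x‖ = ‖x.1‖ := rfl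

instance instMetricSpace : MetricSpace (Corner P) := Subtype.metricSpace

noncomputable instance instNormedRing : NormedRing (Corner P) where
  dist_eq := fun x y => by
    show dist x.1 y.1 = ‖-x.1 + y.1‖
    rw [dist_eq_norm, neg_add_eq_sub, norm_sub_rev]
  norm_mul_le := fun x y => norm_mul_le x.1 y.1

instance instCStarRing : CStarRing (Corner P) :=
  ⟨fun x => le_of_eq (CStarRing.norm_star_mul_self (x := x.1)).symm⟩

noncomputable instance instNormedAlgebra : NormedAlgebra ℂ (Corner P) :=
  { instAlgebra with norm_smul_le := fun c x => norm_smul_le c x.1 }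

instance instCompleteSpace : CompleteSpace (Corner P) := by
  have hcl : IsClosed {x : B | P.q * x = x ∧ x * P.q = x} :=
    (isClosed_eq (continuous_const.mul continuous_id) continuous_id).inter
      (isClosed_eq (continuous_id.mul continuous_const) continuous_id)
  exact hcl.completeSpace_coe

lemma val_sum {ι : Type*} (t : Finset ι) (f : ι → Corner P) :
    (∑ i ∈ t, f i).1 = ∑ i ∈ t, (f i).1 :=
  map_sum (valAddHom (P := P)) f t

end Corner

end CornerConstruction

/-- Let `G = G₁ ∪ G₂` with finitely many vertices, where `G₁` has vertex set
`V₁` and `G₂` has all vertices of `G` (`G₂⁰ = G⁰`), the edge sets `E₁, E₂` are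
disjoint, no edge of `G₂` enters `G₁`, and the shared vertex set `V₁` has `n`
elements.  Then `C*(G) ≅ (C*(G₁) ⊕ ℂ) *_{ℂ^{n+1}} C*(G₂)`, where the
amalgamation is via the unital embeddings
`θ₁(λ₁,...,λ_{n+1}) = (Σᵢ λᵢ p̄ᵢ, λ_{n+1})` and
`θ₂(λ₁,...,λ_{n+1}) = Σᵢ λᵢ p̿ᵢ + λ_{n+1} Σ_β p̿_β`. -/
theorem graph_algebra_iso_amalgam_case1
    (V : Type) [Fintype V] [DecidableEq V]
    (V₁ : Set V) [DecidablePred (· ∈ V₁)]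
    (E₁ E₂ : Type) [Fintype E₁] [Fintype E₂]
    (s₁ r₁ : E₁ → ↥V₁) (s₂ r₂ : E₂ → V)
    (hnoenter : ∀ e : E₂, r₂ e ∉ V₁)
    -- C*(G₁)
    (CA₁ : Type) [NormedRing CA₁] [StarRing CA₁] [CStarRing CA₁]
    [NormedAlgebra ℂ CA₁] [StarModule ℂ CA₁] [CompleteSpace CA₁]
    (F₁ : CKFamily ↥V₁ E₁ s₁ r₁ CA₁) (hF₁ : IsUniversalCKFamily ↥V₁ E₁ s₁ r₁ CA₁ F₁)
    -- C*(G₂)   (G₂ has vertex set all of V)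
    (CA₂ : Type) [NormedRing CA₂] [StarRing CA₂] [CStarRing CA₂]
    [NormedAlgebra ℂ CA₂] [StarModule ℂ CA₂] [CompleteSpace CA₂]
    (F₂ : CKFamily V E₂ s₂ r₂ CA₂) (hF₂ : IsUniversalCKFamily V E₂ s₂ r₂ CA₂ F₂)
    -- C*(G)
    (CG : Type) [NormedRing CG] [StarRing CG] [CStarRing CG]
    [NormedAlgebra ℂ CG] [StarModule ℂ CG] [CompleteSpace CG]
    (F : CKFamily V (E₁ ⊕ E₂) (Sum.elim (fun e => (s₁ e : V)) s₂)
      (Sum.elim (fun e => (r₁ e : V)) r₂) CG)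
    (hF : IsUniversalCKFamily V (E₁ ⊕ E₂) (Sum.elim (fun e => (s₁ e : V)) s₂)
      (Sum.elim (fun e => (r₁ e : V)) r₂) CG F)
    -- the amalgamation data over ℂ^{n+1}
    (n : ℕ) (ι : Fin n ≃ ↥V₁)
    (θ₁ : (Fin (n + 1) → ℂ) →⋆ₐ[ℂ] (CA₁ × ℂ))
    (hθ₁ : ∀ l : Fin (n + 1) → ℂ,
      θ₁ l = (∑ i : Fin n, l i.castSucc • F₁.p (ι i), l (Fin.last n)))
    (θ₂ : (Fin (n + 1) → ℂ) →⋆ₐ[ℂ] CA₂)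
    (hθ₂ : ∀ l : Fin (n + 1) → ℂ,
      θ₂ l = ∑ i : Fin n, l i.castSucc • F₂.p ((ι i : V)) +
        l (Fin.last n) • ∑ v ∈ Finset.univ.filter (fun v : V => v ∉ V₁), F₂.p v)
    -- the amalgamated free product  (C*(G₁) ⊕ ℂ) *_{ℂ^{n+1}} C*(G₂)
    (P : Type) [NormedRing P] [StarRing P] [CStarRing P] [NormedAlgebra ℂ P]
    [StarModule ℂ P] [CompleteSpace P]
    (i₁ : (CA₁ × ℂ) →⋆ₐ[ℂ] P) (i₂ : CA₂ →⋆ₐ[ℂ] P)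
    (hP : IsAmalgamatedFreeProduct θ₁ θ₂ i₁ i₂) :
    ∃ φ : P ≃⋆ₐ[ℂ] CG,
      (∀ v : ↥V₁, φ (i₁ (F₁.p v, 0)) = F.p (v : V)) ∧
      (∀ e : E₁, φ (i₁ (F₁.se e, 0)) = F.se (Sum.inl e)) ∧
      (φ (i₁ (0, 1)) = ∑ v ∈ Finset.univ.filter (fun v : V => v ∉ V₁), F.p v) ∧
      (∀ v : V, φ (i₂ (F₂.p v)) = F.p v) ∧
      (∀ e : E₂, φ (i₂ (F₂.se e)) = F.se (Sum.inr e)) := by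
  classical
  -- the two complementary vertex projections in C*(G)
  set qin : CG := ∑ v ∈ Finset.univ.filter (fun v : V => v ∈ V₁), F.p v with hqin
  set qout : CG := ∑ v ∈ Finset.univ.filter (fun v : V => v ∉ V₁), F.p v with hqout
  have hsplit : qin + qout = 1 := by
    rw [hqin, hqout, Finset.sum_filter_add_sum_filter_not]; exact F.sum_p
  have qin_idem : qin * qin = qin :=
    sum_orth_idem _ _ (fun v _ => F.proj_idem v) (fun v _ w _ h => F.orth v w h)
  have qin_sa : star qin = qin := by
    rw [hqin, star_sum]; exact Finset.sum_congr rfl fun v _ => F.proj_star v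
  let Pq : CStarProjection CG := ⟨qin, qin_idem, qin_sa⟩
  -- membership of the G₁-generators in the corner
  have hpmem₁ : ∀ v : ↥V₁, qin * F.p ↑v = F.p ↑v := by
    intro v
    rw [hqin, Finset.sum_mul,
      Finset.sum_eq_single_of_mem (↑v : V) (by simp [v.2])
        (fun w _ hne => F.orth w ↑v hne)]
    exact F.proj_idem ↑v
  have hpmem₂ : ∀ v : ↥V₁, F.p ↑v * qin = F.p ↑v := by
    intro v
    rw [hqin, Finset.mul_sum,
      Finset.sum_eq_single_of_mem (↑v : V) (by simp [v.2])
        (fun w _ hne => F.orth ↑v w (Ne.symm hne))]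
    exact F.proj_idem ↑v
  have hsmem₁ : ∀ e : E₁, qin * F.se (Sum.inl e) = F.se (Sum.inl e) := by
    intro e
    rw [hqin, Finset.sum_mul,
      Finset.sum_eq_single_of_mem ((r₁ e : V)) (by simp [(r₁ e).2])
        (fun w _ hne => by
          have := F.p_mul_se_ne w (Sum.inl e) (by simpa using hne)
          simpa using this)]
    have := F.p_mul_se (Sum.inl e)
    simpa using this
  have hsmem₂ : ∀ e : E₁, F.se (Sum.inl e) * qin = F.se (Sum.inl e) := by
    intro e
    rw [hqin, Finset.mul_sum,
      Finset.sum_eq_single_of_mem ((s₁ e : V)) (by simp [(s₁ e).2])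
        (fun w _ hne => by
          have := F.se_mul_p_ne (Sum.inl e) w (by simpa using hne)
          simpa using this)]
    have := F.se_mul_p (Sum.inl e)
    simpa using this
  -- the Cuntz–Krieger G₁-family in the corner qin · C*(G) · qin
  let Q₁ : CKFamily ↥V₁ E₁ s₁ r₁ (Corner Pq) :=
    { p := fun v => ⟨F.p ↑v, hpmem₁ v, hpmem₂ v⟩
      se := fun e => ⟨F.se (Sum.inl e), hsmem₁ e, hsmem₂ e⟩
      proj_idem := fun v => Subtype.ext (F.proj_idem ↑v)
      proj_star := fun v => Subtype.ext (F.proj_star ↑v)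
      orth := fun v w hvw =>
        Subtype.ext (F.orth ↑v ↑w (Subtype.coe_injective.ne hvw))
      ck1 := fun e => Subtype.ext (by exact F.ck1 (Sum.inl e))
      ck2 := fun v hv => by
        obtain ⟨e, he⟩ := hv
        apply Subtype.ext
        rw [Corner.val_sum]
        have h2 := F.ck2 (↑v) ⟨Sum.inl e, by simpa using congrArg Subtype.val he⟩
        show F.p ↑v = ∑ i ∈ Finset.univ.filter (fun e => r₁ e = v),
          F.se (Sum.inl i) * star (F.se (Sum.inl i))
        rw [h2]
        refine sum_filter_inl _ _ (fun e₁ => ?_) (fun e₂ hc => ?_) _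
        · simp [Subtype.ext_iff]
        · exact hnoenter e₂ (by
            rw [show r₂ e₂ = (↑v : V) from by simpa using hc]; exact v.2)
      sum_p := by
        apply Subtype.ext
        refine (Corner.val_sum (P := Pq) Finset.univ
          (fun v : ↥V₁ => (⟨F.p ↑v, hpmem₁ v, hpmem₂ v⟩ : Corner Pq))).trans ?_
        show (∑ v : ↥V₁, F.p ↑v) = qin
        rw [hqin]
        exact (Finset.sum_subtype _ (by simp) _).symm }
  obtain ⟨ψ, ⟨hψp, hψse⟩, -⟩ := hF₁ (Corner Pq) Q₁
  have hψp' : ∀ v : ↥V₁, (ψ (F₁.p v)).1 = F.p ↑v := fun v => by rw [hψp v]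
  have hψse' : ∀ e : E₁, (ψ (F₁.se e)).1 = F.se (Sum.inl e) := fun e => by
    rw [hψse e]
  -- the complementary projection
  set c : CG := 1 - qin with hc
  have hc_qout : c = qout := by rw [hc, ← hsplit, add_sub_cancel_left]
  have hcc : c * c = c := by
    rw [hc, sub_mul, one_mul, mul_sub, mul_one, qin_idem, sub_self, sub_zero]
  have hstarc : star c = c := by rw [hc, star_sub, star_one, qin_sa]
  have hψc : ∀ a : CA₁, (ψ a).1 * c = 0 := fun a => by
    rw [hc, mul_sub, mul_one, (ψ a).2.2, sub_self]
  have hcψ : ∀ a : CA₁, c * (ψ a).1 = 0 := fun a => by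
    rw [hc, sub_mul, one_mul, (ψ a).2.1, sub_self]
  -- the first leg (C*(G₁) ⊕ ℂ) → C*(G)
  let π₁ : (CA₁ × ℂ) →⋆ₐ[ℂ] CG :=
    { toFun := fun x => (ψ x.1).1 + x.2 • c
      map_one' := by
        show (ψ 1).1 + (1 : ℂ) • c = 1
        rw [map_one ψ, one_smul]
        show qin + c = 1
        rw [hc, add_sub_cancel]
      map_mul' := fun x y => by
        show (ψ (x.1 * y.1)).1 + (x.2 * y.2) • c
          = ((ψ x.1).1 + x.2 • c) * ((ψ y.1).1 + y.2 • c)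
        rw [mul_add, add_mul, add_mul, map_mul ψ, Corner.val_mul,
          mul_smul_comm, hψc, smul_zero, smul_mul_assoc, hcψ, smul_zero,
          smul_mul_assoc, mul_smul_comm, hcc, smul_smul, add_zero, zero_add]
      map_zero' := by
        show (ψ 0).1 + (0 : ℂ) • c = 0
        rw [map_zero ψ, zero_smul]
        show (0 : CG) + 0 = 0
        rw [add_zero]
      map_add' := fun x y => by
        show (ψ (x.1 + y.1)).1 + (x.2 + y.2) • c = _
        rw [map_add ψ, Corner.val_add, add_smul]
        show _ = (ψ x.1).1 + x.2 • c + ((ψ y.1).1 + y.2 • c)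
        abel
      commutes' := fun t => by
        show (ψ (algebraMap ℂ CA₁ t)).1 + t • c = algebraMap ℂ CG t
        rw [AlgHomClass.commutes ψ t]
        have e1 : (algebraMap ℂ (Corner Pq) t).1 = t • qin := by
          rw [Algebra.algebraMap_eq_smul_one]; rfl
        rw [e1, ← smul_add, show qin + c = 1 from by rw [hc, add_sub_cancel],
          Algebra.algebraMap_eq_smul_one]
      map_star' := fun x => by
        show (ψ (star x.1)).1 + (star x.2) • c = star ((ψ x.1).1 + x.2 • c)
        rw [star_add, ← Corner.val_star, ← map_star ψ, star_smul, hstarc] }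
  have hpi1app : ∀ x : CA₁ × ℂ, π₁ x = (ψ x.1).1 + x.2 • c := fun _ => rfl
  -- the second leg C*(G₂) → C*(G)
  let Q₂ : CKFamily V E₂ s₂ r₂ CG :=
    { p := F.p
      se := fun e => F.se (Sum.inr e)
      proj_idem := F.proj_idem
      proj_star := F.proj_star
      orth := F.orth
      ck1 := fun e => by simpa using F.ck1 (Sum.inr e)
      ck2 := fun v hv => by
        obtain ⟨e, he⟩ := hv
        have hvout : v ∉ V₁ := he ▸ hnoenter e
        have h2 := F.ck2 v ⟨Sum.inr e, by simpa using he⟩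
        rw [h2]
        refine sum_filter_inr _ _ (fun e₂ => by simp) (fun e₁ hcon => ?_) _
        · exact hvout (by
            rw [← show ((r₁ e₁ : V)) = v from by simpa using hcon]
            exact (r₁ e₁).2)
      sum_p := F.sum_p }
  obtain ⟨π₂, ⟨hπ₂p, hπ₂se⟩, -⟩ := hF₂ CG Q₂
  have hπ₂p' : ∀ v : V, π₂ (F₂.p v) = F.p v := fun v => hπ₂p v
  have hπ₂se' : ∀ e : E₂, π₂ (F₂.se e) = F.se (Sum.inr e) := fun e => hπ₂se e
  -- compatibility of the two legs
  have hcompat : π₁.comp θ₁ = π₂.comp θ₂ := by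
    apply StarAlgHom.ext
    intro l
    rw [StarAlgHom.comp_apply, StarAlgHom.comp_apply, hθ₁ l, hθ₂ l, hpi1app]
    show (ψ (∑ i : Fin n, l i.castSucc • F₁.p (ι i))).1
        + l (Fin.last n) • c = _
    rw [map_add π₂, map_smul π₂, map_sum π₂, map_sum ψ, Corner.val_sum]
    congr 1
    · refine Finset.sum_congr rfl fun i _ => ?_
      rw [map_smul ψ, Corner.val_smul, hψp', map_smul π₂, hπ₂p']
    · rw [map_sum π₂, hc_qout, hqout]
      congr 1
      exact Finset.sum_congr rfl fun v _ => (hπ₂p' v).symm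
  obtain ⟨π, ⟨hπi₁, hπi₂⟩, -⟩ := hP.2 CG π₁ π₂ hcompat
  have hπi₁' : ∀ x, π (i₁ x) = π₁ x := fun x => DFunLike.congr_fun hπi₁ x
  have hπi₂' : ∀ x, π (i₂ x) = π₂ x := fun x => DFunLike.congr_fun hπi₂ x
  -- the amalgamation identities
  have key : ∀ l : Fin (n + 1) → ℂ, i₁ (θ₁ l) = i₂ (θ₂ l) := fun l => by
    have := DFunLike.congr_fun hP.1 l
    simpa [StarAlgHom.comp_apply] using this
  have hc1 : ∀ v : ↥V₁, i₁ (F₁.p v, 0) = i₂ (F₂.p ↑v) := by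
    intro v
    set l : Fin (n + 1) → ℂ := Pi.single ((ι.symm v).castSucc) 1 with hl
    have hkey := key l
    rw [hθ₁, hθ₂] at hkey
    have hlast : l (Fin.last n) = 0 := by
      rw [hl, Pi.single_eq_of_ne (Fin.castSucc_lt_last _).ne']
    have happ : ∀ i : Fin n, l i.castSucc = if i = ι.symm v then 1 else 0 := by
      intro i
      rw [hl, Pi.single_apply]
      simp [Fin.castSucc_inj]
    have hsum1 : (∑ i : Fin n, l i.castSucc • F₁.p (ι i)) = F₁.p v := by
      rw [Finset.sum_congr rfl fun i (_ : i ∈ Finset.univ) => by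
        rw [happ i, ite_smul, one_smul, zero_smul]]
      rw [Finset.sum_ite_eq' Finset.univ (ι.symm v) (fun i => F₁.p (ι i))]
      simp
    have hsum2 : (∑ i : Fin n, l i.castSucc • F₂.p ((ι i : V))) = F₂.p ↑v := by
      rw [Finset.sum_congr rfl fun i (_ : i ∈ Finset.univ) => by
        rw [happ i, ite_smul, one_smul, zero_smul]]
      rw [Finset.sum_ite_eq' Finset.univ (ι.symm v) (fun i => F₂.p ((ι i : V)))]
      simp
    rw [hsum1, hsum2, hlast] at hkey
    simpa using hkey
  have hc2 : i₁ ((0 : CA₁), (1 : ℂ))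
      = i₂ (∑ v ∈ Finset.univ.filter (fun v : V => v ∉ V₁), F₂.p v) := by
    set l : Fin (n + 1) → ℂ := Pi.single (Fin.last n) 1 with hl
    have hkey := key l
    rw [hθ₁, hθ₂] at hkey
    have hzero : ∀ i : Fin n, l i.castSucc = 0 :=
      fun i => by rw [hl, Pi.single_eq_of_ne (Fin.castSucc_lt_last i).ne]
    have hlast : l (Fin.last n) = 1 := by rw [hl, Pi.single_eq_same]
    simp only [hzero, zero_smul, Finset.sum_const_zero, hlast,
      one_smul, zero_add] at hkey
    exact hkey
  -- a ↦ i₁ (a, 0) as an additive monoid hom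
  let j₁ : CA₁ →+ P :=
    { toFun := fun a => i₁ (a, 0)
      map_zero' := by
        show i₁ ((0 : CA₁), (0 : ℂ)) = 0
        rw [show ((0 : CA₁), (0 : ℂ)) = (0 : CA₁ × ℂ) from rfl, map_zero]
      map_add' := fun a b => by
        show i₁ (a + b, 0) = i₁ (a, 0) + i₁ (b, 0)
        rw [← map_add]
        congr 1
        apply Prod.ext <;> simp }
  have hj₁ : ∀ a : CA₁, j₁ a = i₁ (a, 0) := fun _ => rfl
  -- the Cuntz–Krieger G-family in the amalgamated free product
  let QG : CKFamily V (E₁ ⊕ E₂) (Sum.elim (fun e => (s₁ e : V)) s₂)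
      (Sum.elim (fun e => (r₁ e : V)) r₂) P :=
    { p := fun v => i₂ (F₂.p v)
      se := Sum.elim (fun e₁ => i₁ (F₁.se e₁, 0)) (fun e₂ => i₂ (F₂.se e₂))
      proj_idem := fun v => by rw [← map_mul, F₂.proj_idem]
      proj_star := fun v => by rw [← map_star, F₂.proj_star]
      orth := fun v w h => by rw [← map_mul, F₂.orth v w h, map_zero]
      ck1 := fun e => by
        cases e with
        | inl e₁ =>
          show star (i₁ (F₁.se e₁, 0)) * i₁ (F₁.se e₁, 0) = i₂ (F₂.p ↑(s₁ e₁))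
          rw [← hc1 (s₁ e₁), ← map_star, ← map_mul]
          congr 1
          apply Prod.ext
          · simpa using F₁.ck1 e₁
          · simp
        | inr e₂ =>
          show star (i₂ (F₂.se e₂)) * i₂ (F₂.se e₂) = i₂ (F₂.p (s₂ e₂))
          rw [← map_star, ← map_mul, F₂.ck1]
      ck2 := fun v hv => by
        obtain ⟨e, he⟩ := hv
        cases e with
        | inl e₁ =>
          have he' : ((r₁ e₁ : V)) = v := he
          have hv₁ : v ∈ V₁ := he' ▸ (r₁ e₁).2
          rw [sum_filter_inl _ (fun e₁' => r₁ e₁' = (⟨v, hv₁⟩ : ↥V₁))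
            (fun e₁' => by simp [Subtype.ext_iff])
            (fun e₂' hcon => hnoenter e₂' (by
              rw [show r₂ e₂' = v from by simpa using hcon]; exact hv₁)) _]
          calc i₂ (F₂.p v) = i₁ (F₁.p ⟨v, hv₁⟩, 0) := (hc1 ⟨v, hv₁⟩).symm
            _ = j₁ (F₁.p ⟨v, hv₁⟩) := rfl
            _ = j₁ (∑ e' ∈ Finset.univ.filter (fun e' => r₁ e' = ⟨v, hv₁⟩),
                F₁.se e' * star (F₁.se e')) := by
                rw [F₁.ck2 ⟨v, hv₁⟩ ⟨e₁, Subtype.ext he'⟩]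
            _ = ∑ e' ∈ Finset.univ.filter (fun e' => r₁ e' = ⟨v, hv₁⟩),
                j₁ (F₁.se e' * star (F₁.se e')) := map_sum j₁ _ _
            _ = _ := by
                refine Finset.sum_congr rfl fun e' _ => ?_
                show i₁ (F₁.se e' * star (F₁.se e'), 0)
                  = i₁ (F₁.se e', 0) * star (i₁ (F₁.se e', 0))
                rw [← map_star, ← map_mul]
                congr 1
                apply Prod.ext <;> simp
        | inr e₂ =>
          have he' : r₂ e₂ = v := he
          have hvout : v ∉ V₁ := he' ▸ hnoenter e₂
          rw [sum_filter_inr _ (fun e₂' => r₂ e₂' = v)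
            (fun e₂' => by simp)
            (fun e₁' hcon => hvout (by
              rw [← show ((r₁ e₁' : V)) = v from by simpa using hcon]
              exact (r₁ e₁').2)) _]
          calc i₂ (F₂.p v)
              = i₂ (∑ e' ∈ Finset.univ.filter (fun e' => r₂ e' = v),
                F₂.se e' * star (F₂.se e')) := by rw [← F₂.ck2 v ⟨e₂, he'⟩]
            _ = ∑ e' ∈ Finset.univ.filter (fun e' => r₂ e' = v),
                i₂ (F₂.se e' * star (F₂.se e')) := map_sum i₂ _ _
            _ = _ := by
                refine Finset.sum_congr rfl fun e' _ => ?_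
                show i₂ (F₂.se e' * star (F₂.se e'))
                  = i₂ (F₂.se e') * star (i₂ (F₂.se e'))
                rw [map_mul, map_star]
      sum_p := by rw [← map_sum, F₂.sum_p, map_one] }
  obtain ⟨ρ, ⟨hρp, hρse⟩, -⟩ := hF P QG
  have hρp' : ∀ v : V, ρ (F.p v) = i₂ (F₂.p v) := fun v => hρp v
  have hρse₁ : ∀ e : E₁, ρ (F.se (Sum.inl e)) = i₁ (F₁.se e, 0) :=
    fun e => hρse (Sum.inl e)
  have hρse₂ : ∀ e : E₂, ρ (F.se (Sum.inr e)) = i₂ (F₂.se e) :=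
    fun e => hρse (Sum.inr e)
  -- π ∘ ρ = id
  have hπρ : π.comp ρ = StarAlgHom.id ℂ CG := by
    refine (hF CG F).unique ⟨fun v => ?_, fun e => ?_⟩ ⟨fun v => rfl, fun e => rfl⟩
    · rw [StarAlgHom.comp_apply, hρp' v, hπi₂', hπ₂p' v]
    · cases e with
      | inl e₁ =>
        rw [StarAlgHom.comp_apply, hρse₁ e₁, hπi₁', hpi1app]
        show (ψ (F₁.se e₁)).1 + (0 : ℂ) • c = F.se (Sum.inl e₁)
        rw [hψse', zero_smul, add_zero]
      | inr e₂ =>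
        rw [StarAlgHom.comp_apply, hρse₂ e₂, hπi₂', hπ₂se' e₂]
  -- ρ ∘ π₂ = i₂
  let Q₂P : CKFamily V E₂ s₂ r₂ P :=
    { p := fun v => i₂ (F₂.p v)
      se := fun e => i₂ (F₂.se e)
      proj_idem := fun v => by rw [← map_mul, F₂.proj_idem]
      proj_star := fun v => by rw [← map_star, F₂.proj_star]
      orth := fun v w h => by rw [← map_mul, F₂.orth v w h, map_zero]
      ck1 := fun e => by rw [← map_star, ← map_mul, F₂.ck1]
      ck2 := fun v hv => by
        show i₂ (F₂.p v) = ∑ e ∈ Finset.univ.filter (fun e => r₂ e = v),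
          i₂ (F₂.se e) * star (i₂ (F₂.se e))
        rw [F₂.ck2 v hv, map_sum]
        exact Finset.sum_congr rfl fun e _ => by rw [map_mul, map_star]
      sum_p := by rw [← map_sum, F₂.sum_p, map_one] }
  have hρπ₂ : ρ.comp π₂ = i₂ := by
    refine (hF₂ P Q₂P).unique ⟨fun v => ?_, fun e => ?_⟩ ⟨fun v => rfl, fun e => rfl⟩
    · rw [StarAlgHom.comp_apply, hπ₂p' v, hρp' v]
    · rw [StarAlgHom.comp_apply, hπ₂se' e, hρse₂ e]
  -- ρ maps qin to i₁ (1, 0) and c to i₁ (0, 1)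
  have hρqin : ρ qin = i₁ (1, 0) := by
    have h1 : ρ qin = ∑ v : ↥V₁, ρ (F.p ↑v) := by
      rw [hqin, map_sum]
      exact Finset.sum_subtype _ (by simp) _
    rw [h1]
    calc (∑ v : ↥V₁, ρ (F.p ↑v)) = ∑ v : ↥V₁, j₁ (F₁.p v) := by
          refine Finset.sum_congr rfl fun v _ => ?_
          rw [hρp' ↑v, ← hc1 v, hj₁]
      _ = j₁ (∑ v : ↥V₁, F₁.p v) := (map_sum j₁ _ _).symm
      _ = i₁ (1, 0) := by rw [F₁.sum_p, hj₁]
  have hρc : ρ c = i₁ (0, 1) := by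
    rw [hc, map_sub, map_one, hρqin, ← map_one i₁, ← map_sub]
    congr 1
    show ((1 : CA₁), (1 : ℂ)) - ((1 : CA₁), (0 : ℂ)) = ((0 : CA₁), (1 : ℂ))
    apply Prod.ext <;> simp
  -- the corner of P at i₁ (1, 0)
  let PqP : CStarProjection P :=
    ⟨i₁ (1, 0),
      by
        rw [← map_mul]
        congr 1
        show (((1 : CA₁) * 1, (0 : ℂ) * 0) : CA₁ × ℂ) = (1, 0)
        simp,
      by
        rw [← map_star]
        congr 1
        show ((star (1 : CA₁), star (0 : ℂ)) : CA₁ × ℂ) = (1, 0)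
        simp⟩
  have hmemP : ∀ a : CA₁,
      i₁ (1, 0) * i₁ (a, 0) = i₁ (a, 0) ∧ i₁ (a, 0) * i₁ (1, 0) = i₁ (a, 0) := by
    intro a
    constructor
    · rw [← map_mul]
      congr 1
      show (((1 : CA₁) * a, (0 : ℂ) * 0) : CA₁ × ℂ) = (a, 0)
      simp
    · rw [← map_mul]
      congr 1
      show ((a * (1 : CA₁), (0 : ℂ) * 0) : CA₁ × ℂ) = (a, 0)
      simp
  have hmemg : ∀ a : CA₁,
      i₁ (1, 0) * ρ ((ψ a).1) = ρ ((ψ a).1)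
        ∧ ρ ((ψ a).1) * i₁ (1, 0) = ρ ((ψ a).1) := by
    intro a
    constructor
    · rw [← hρqin, ← map_mul, (ψ a).2.1]
    · rw [← hρqin, ← map_mul, (ψ a).2.2]
  -- the Cuntz–Krieger G₁-family in the corner of P
  let Q₁P : CKFamily ↥V₁ E₁ s₁ r₁ (Corner PqP) :=
    { p := fun v => ⟨i₁ (F₁.p v, 0), (hmemP _).1, (hmemP _).2⟩
      se := fun e => ⟨i₁ (F₁.se e, 0), (hmemP _).1, (hmemP _).2⟩
      proj_idem := fun v => Subtype.ext (by
        show i₁ (F₁.p v, 0) * i₁ (F₁.p v, 0) = i₁ (F₁.p v, 0)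
        rw [← map_mul]
        congr 1
        apply Prod.ext
        · simpa using F₁.proj_idem v
        · simp)
      proj_star := fun v => Subtype.ext (by
        show star (i₁ (F₁.p v, 0)) = i₁ (F₁.p v, 0)
        rw [← map_star]
        congr 1
        apply Prod.ext
        · simpa using F₁.proj_star v
        · simp)
      orth := fun v w hvw => Subtype.ext (by
        show i₁ (F₁.p v, 0) * i₁ (F₁.p w, 0) = 0
        rw [← map_mul, show ((0 : P)) = i₁ 0 from (map_zero i₁).symm]
        congr 1
        apply Prod.ext
        · simpa using F₁.orth v w hvw
        · simp)
      ck1 := fun e => Subtype.ext (by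
        show star (i₁ (F₁.se e, 0)) * i₁ (F₁.se e, 0) = i₁ (F₁.p (s₁ e), 0)
        rw [← map_star, ← map_mul]
        congr 1
        apply Prod.ext
        · simpa using F₁.ck1 e
        · simp)
      ck2 := fun v hv => Subtype.ext (by
        rw [Corner.val_sum]
        show i₁ (F₁.p v, 0) = _
        calc i₁ (F₁.p v, 0) = j₁ (F₁.p v) := rfl
          _ = j₁ (∑ e ∈ Finset.univ.filter (fun e => r₁ e = v),
              F₁.se e * star (F₁.se e)) := by rw [F₁.ck2 v hv]
          _ = ∑ e ∈ Finset.univ.filter (fun e => r₁ e = v),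
              j₁ (F₁.se e * star (F₁.se e)) := map_sum j₁ _ _
          _ = _ := by
              refine Finset.sum_congr rfl fun e _ => ?_
              show i₁ (F₁.se e * star (F₁.se e), 0)
                = i₁ (F₁.se e, 0) * star (i₁ (F₁.se e, 0))
              rw [← map_star, ← map_mul]
              congr 1
              apply Prod.ext <;> simp)
      sum_p := Subtype.ext (by
        refine (Corner.val_sum (P := PqP) Finset.univ
          (fun v => (⟨i₁ (F₁.p v, 0), (hmemP _).1, (hmemP _).2⟩ : Corner PqP))).trans ?_
        show (∑ v : ↥V₁, i₁ (F₁.p v, 0)) = i₁ (1, 0)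
        calc (∑ v : ↥V₁, i₁ (F₁.p v, 0)) = ∑ v : ↥V₁, j₁ (F₁.p v) := rfl
          _ = j₁ (∑ v : ↥V₁, F₁.p v) := (map_sum j₁ _ _).symm
          _ = i₁ (1, 0) := by rw [F₁.sum_p, hj₁]) }
  -- two unital *-homomorphisms CA₁ → Corner PqP agreeing on the family
  have hmemg' : ∀ a : CA₁,
      PqP.q * ρ ((ψ a).1) = ρ ((ψ a).1) ∧ ρ ((ψ a).1) * PqP.q = ρ ((ψ a).1) :=
    fun a => hmemg a
  let g : CA₁ →⋆ₐ[ℂ] Corner PqP :=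
    { toFun := fun a => ⟨ρ ((ψ a).1), (hmemg' a).1, (hmemg' a).2⟩
      map_one' := Subtype.ext (by
        show ρ ((ψ 1).1) = PqP.q
        rw [map_one ψ]
        show ρ qin = i₁ (1, 0)
        exact hρqin)
      map_mul' := fun a b => Subtype.ext (by
        show ρ ((ψ (a * b)).1) = ρ ((ψ a).1) * ρ ((ψ b).1)
        rw [map_mul ψ, Corner.val_mul, map_mul])
      map_zero' := Subtype.ext (by
        show ρ ((ψ 0).1) = 0
        rw [map_zero ψ]
        show ρ (0 : CG) = 0
        rw [map_zero])
      map_add' := fun a b => Subtype.ext (by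
        show ρ ((ψ (a + b)).1) = ρ ((ψ a).1) + ρ ((ψ b).1)
        rw [map_add ψ, Corner.val_add, map_add])
      commutes' := fun t => Subtype.ext (by
        show ρ ((ψ (algebraMap ℂ CA₁ t)).1) = (algebraMap ℂ (Corner PqP) t).1
        rw [AlgHomClass.commutes ψ t]
        have e1 : (algebraMap ℂ (Corner Pq) t).1 = t • qin := by
          rw [Algebra.algebraMap_eq_smul_one]; rfl
        have e2 : (algebraMap ℂ (Corner PqP) t).1 = t • i₁ (1, 0) := by
          rw [Algebra.algebraMap_eq_smul_one]; rfl
        rw [e1, e2, map_smul, hρqin])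
      map_star' := fun a => Subtype.ext (by
        show ρ ((ψ (star a)).1) = star (ρ ((ψ a).1))
        rw [map_star ψ, Corner.val_star, map_star]) }
  let h : CA₁ →⋆ₐ[ℂ] Corner PqP :=
    { toFun := fun a => ⟨i₁ (a, 0), (hmemP a).1, (hmemP a).2⟩
      map_one' := Subtype.ext rfl
      map_mul' := fun a b => Subtype.ext (by
        show i₁ (a * b, 0) = i₁ (a, 0) * i₁ (b, 0)
        rw [← map_mul]
        congr 1
        apply Prod.ext <;> simp)
      map_zero' := Subtype.ext (by
        show i₁ ((0 : CA₁), (0 : ℂ)) = 0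
        rw [show ((0 : CA₁), (0 : ℂ)) = (0 : CA₁ × ℂ) from rfl, map_zero])
      map_add' := fun a b => Subtype.ext (by
        show i₁ (a + b, 0) = i₁ (a, 0) + i₁ (b, 0)
        rw [← map_add]
        congr 1
        apply Prod.ext <;> simp)
      commutes' := fun t => Subtype.ext (by
        show i₁ (algebraMap ℂ CA₁ t, 0) = (algebraMap ℂ (Corner PqP) t).1
        have e2 : (algebraMap ℂ (Corner PqP) t).1 = t • i₁ (1, 0) := by
          rw [Algebra.algebraMap_eq_smul_one]; rfl
        rw [e2, ← map_smul]
        congr 1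
        apply Prod.ext
        · show algebraMap ℂ CA₁ t = t • (1 : CA₁)
          rw [Algebra.algebraMap_eq_smul_one]
        · show (0 : ℂ) = t • (0 : ℂ)
          rw [smul_zero])
      map_star' := fun a => Subtype.ext (by
        show i₁ (star a, 0) = star (i₁ (a, 0))
        rw [← map_star]
        congr 1
        apply Prod.ext <;> simp) }
  have hgh : g = h := by
    refine (hF₁ (Corner PqP) Q₁P).unique ⟨fun v => ?_, fun e => ?_⟩
      ⟨fun v => rfl, fun e => rfl⟩
    · apply Subtype.ext
      show ρ ((ψ (F₁.p v)).1) = i₁ (F₁.p v, 0)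
      rw [hψp', hρp', ← hc1 v]
    · apply Subtype.ext
      show ρ ((ψ (F₁.se e)).1) = i₁ (F₁.se e, 0)
      rw [hψse', hρse₁]
  have hgh' : ∀ a : CA₁, ρ ((ψ a).1) = i₁ (a, 0) := fun a =>
    congrArg Subtype.val (DFunLike.congr_fun hgh a)
  -- ρ ∘ π₁ = i₁
  have hρπ₁ : ρ.comp π₁ = i₁ := by
    apply StarAlgHom.ext
    intro x
    rw [StarAlgHom.comp_apply, hpi1app, map_add, map_smul, hgh' x.1, hρc]
    rw [← map_smul i₁, ← map_add i₁]
    congr 1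
    apply Prod.ext
    · show x.1 + x.2 • (0 : CA₁) = x.1
      rw [smul_zero, add_zero]
    · show (0 : ℂ) + x.2 • (1 : ℂ) = x.2
      rw [smul_eq_mul, mul_one, zero_add]
  -- ρ ∘ π = id
  have hρπ : ρ.comp π = StarAlgHom.id ℂ P := by
    refine (hP.2 P i₁ i₂ hP.1).unique ⟨?_, ?_⟩ ⟨?_, ?_⟩
    · rw [StarAlgHom.comp_assoc, hπi₁, hρπ₁]
    · rw [StarAlgHom.comp_assoc, hπi₂, hρπ₂]
    · exact StarAlgHom.id_comp i₁
    · exact StarAlgHom.id_comp i₂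
  -- assemble the equivalence
  let φ : P ≃⋆ₐ[ℂ] CG :=
    { toFun := π
      invFun := ρ
      left_inv := fun x => by
        have := DFunLike.congr_fun hρπ x
        simpa using this
      right_inv := fun y => by
        have := DFunLike.congr_fun hπρ y
        simpa using this
      map_mul' := map_mul π
      map_add' := map_add π
      map_smul' := map_smul π
      map_star' := map_star π }
  have hφ : ∀ x : P, φ x = π x := fun _ => rfl
  refine ⟨φ, fun v => ?_, fun e => ?_, ?_, fun v => ?_, fun e => ?_⟩
  · rw [hφ, hπi₁', hpi1app]
    show (ψ (F₁.p v)).1 + (0 : ℂ) • c = F.p ↑v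
    rw [hψp', zero_smul, add_zero]
  · rw [hφ, hπi₁', hpi1app]
    show (ψ (F₁.se e)).1 + (0 : ℂ) • c = F.se (Sum.inl e)
    rw [hψse', zero_smul, add_zero]
  · rw [hφ, hπi₁', hpi1app]
    show (ψ 0).1 + (1 : ℂ) • c = qout
    rw [map_zero ψ, one_smul, hc_qout]
    show (0 : CG) + qout = qout
    rw [zero_add]
  · rw [hφ, hπi₂', hπ₂p' v]
  · rw [hφ, hπi₂', hπ₂se' e]
end
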